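/- Let n > m ≥ 2 be integers, let A_1, …, A_{m−1} be a skew Clifford system on ℝ^{n+1}, set c = (m−1)/(n−1), and fix y ∈ ℝ^{n+1} with ‖y‖ = 1. Define F̃ : ℝ^{n+1} → ℝ by F̃(x) = ⟨x,y⟩² + Σ_{q=1}^{m−1} ⟨A_q x, y⟩² − c‖x‖². Then at every point x with F̃(x) = 0, Hsiang's minimality identity holds: ⟨D(‖DF̃‖²)(x), DF̃(x)⟩ = 2‖DF̃(x)‖² · Δ^E F̃(x), where D denotes the Euclidean gradient and Δ^E the Euclidean Laplacian. (Hence the slice cone {F̃ = 0} is a minimal cone, i.e., the slices of the minimal FKM isoparametric hypersurface are minimal hypersurfaces in S^n.) -/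

import Mathlib

open Matrix
open scoped RealInnerProductSpace BigOperators

noncomputable section

/-- A skew Clifford system `A_1, …, A_{m-1}` on `ℝ^N`: skew-symmetric matrices with
`A_p A_q + A_q A_p = -2 δ_{pq} Id`. -/
def IsSkewCliffordSystem {N m : ℕ} (A : Fin (m - 1) → Matrix (Fin N) (Fin N) ℝ) : Prop :=
  (∀ p q, A p * A q + A q * A p =
      if p = q then (-2 : ℝ) • (1 : Matrix (Fin N) (Fin N) ℝ) else 0) ∧
  (∀ p, (A p)ᵀ = -A p)

/-- The action of a matrix on Euclidean space. -/
def act {N : ℕ} (A : Matrix (Fin N) (Fin N) ℝ) (x : EuclideanSpace ℝ (Fin N)) :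
    EuclideanSpace ℝ (Fin N) :=
  Matrix.toEuclideanLin A x

/-- The splitting form of the FKM isoparametric polynomial:
`F(x,y) = ⟨x,y⟩² + Σ_q ⟨A_q x, y⟩²`. -/
def FKM {N m : ℕ} (A : Fin (m - 1) → Matrix (Fin N) (Fin N) ℝ)
    (x y : EuclideanSpace ℝ (Fin N)) : ℝ :=
  ⟪x, y⟫ ^ 2 + ∑ q, ⟪act (A q) x, y⟫ ^ 2

/-! ### Auxiliary lemmas -/

section Aux

variable {N : ℕ}

lemma act_inner (B : Matrix (Fin N) (Fin N) ℝ) (x z : EuclideanSpace ℝ (Fin N)) :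
    ⟪act B x, z⟫ = ⟪x, act Bᵀ z⟫ := by
  have h : Bᵀ.toEuclideanLin = LinearMap.adjoint B.toEuclideanLin := by
    simpa using Matrix.toEuclideanLin_conjTranspose_eq_adjoint (𝕜 := ℝ) B
  simp only [act, h, LinearMap.adjoint_inner_right]

lemma act_add (B C : Matrix (Fin N) (Fin N) ℝ) (x : EuclideanSpace ℝ (Fin N)) :
    act (B + C) x = act B x + act C x := by
  simp [act, map_add]

lemma act_mul (B C : Matrix (Fin N) (Fin N) ℝ) (x : EuclideanSpace ℝ (Fin N)) :
    act (B * C) x = act B (act C x) := by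
  simp [act, Matrix.toEuclideanLin_apply, Matrix.mulVec_mulVec]

lemma act_smul (r : ℝ) (B : Matrix (Fin N) (Fin N) ℝ) (x : EuclideanSpace ℝ (Fin N)) :
    act (r • B) x = r • act B x := by
  simp [act, _root_.map_smul]

lemma act_one (x : EuclideanSpace ℝ (Fin N)) : act (1 : Matrix (Fin N) (Fin N) ℝ) x = x := by
  simp [act, Matrix.toEuclideanLin_apply]

lemma act_linear (B : Matrix (Fin N) (Fin N) ℝ) (x v : EuclideanSpace ℝ (Fin N)) (t : ℝ) :
    act B (x + t • v) = act B x + t • act B v := by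
  simp [act, map_add, _root_.map_smul]

lemma act_neg (B : Matrix (Fin N) (Fin N) ℝ) (x : EuclideanSpace ℝ (Fin N)) :
    act (-B) x = -act B x := by
  simp [act, map_neg]

lemma act_zero (x : EuclideanSpace ℝ (Fin N)) : act (0 : Matrix (Fin N) (Fin N) ℝ) x = 0 := by
  simp [act, map_zero]

variable {m : ℕ} {A : Fin (m - 1) → Matrix (Fin N) (Fin N) ℝ}
  {y : EuclideanSpace ℝ (Fin N)}

lemma inner_w_w
    (hA1 : ∀ p q, A p * A q + A q * A p =
      if p = q then (-2 : ℝ) • (1 : Matrix (Fin N) (Fin N) ℝ) else 0)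
    (hA2 : ∀ p, (A p)ᵀ = -A p) (hy : ‖y‖ = 1) (p q : Fin (m - 1)) :
    ⟪act (A p)ᵀ y, act (A q)ᵀ y⟫ = if p = q then 1 else 0 := by
  have key : ∀ p q : Fin (m - 1),
      ⟪act (A p)ᵀ y, act (A q)ᵀ y⟫ = -⟪y, act (A p * A q) y⟫ := by
    intro p q
    rw [act_inner, transpose_transpose, ← act_mul, hA2 q, mul_neg, act_neg, inner_neg_right]
  have h2 : (2 : ℝ) * ⟪act (A p)ᵀ y, act (A q)ᵀ y⟫
      = -⟪y, act (A p * A q + A q * A p) y⟫ := by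
    rw [act_add, inner_add_right, neg_add]
    rw [← key p q, ← key q p]
    rw [real_inner_comm (act (A q)ᵀ y) (act (A p)ᵀ y)]
    ring
  rw [hA1] at h2
  by_cases hpq : p = q
  · have hyy : ⟪y, y⟫ = 1 := by
      rw [real_inner_self_eq_norm_sq, hy]; norm_num
    simp only [hpq, if_true, eq_self_iff_true] at h2 ⊢
    rw [act_smul, act_one, inner_smul_right, hyy] at h2
    linarith
  · simp only [hpq, if_false] at h2 ⊢
    rw [act_zero, inner_zero_right] at h2
    linarith

lemma inner_w_y (hA2 : ∀ p, (A p)ᵀ = -A p) (q : Fin (m - 1)) :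
    ⟪act (A q)ᵀ y, y⟫ = 0 := by
  have h1 : ⟪act (A q)ᵀ y, y⟫ = ⟪y, act (A q) y⟫ := by
    rw [act_inner, transpose_transpose]
  have h2 : ⟪y, act (A q) y⟫ = -⟪y, act (A q) y⟫ := by
    conv_lhs => rw [real_inner_comm, act_inner, hA2 q, act_neg, inner_neg_right]
  linarith [h1, h2]

/-- Expansion of the inner product of two vectors of combination form. -/
lemma inner_comb {k : ℕ} (y x' : EuclideanSpace ℝ (Fin N))
    (w : Fin k → EuclideanSpace ℝ (Fin N))
    (hyy : ⟪y, y⟫ = 1)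
    (hww : ∀ p q, ⟪w p, w q⟫ = if p = q then 1 else 0)
    (hwy : ∀ q, ⟪w q, y⟫ = 0)
    (v : Fin k → ℝ)
    (hwx : ∀ q, ⟪x', w q⟫ = v q)
    (a e a' e' : ℝ) (b b' : Fin k → ℝ) :
    ⟪a•y + (∑ q, b q • w q) + e•x', a'•y + (∑ q, b' q • w q) + e'•x'⟫
    = a*a' + (∑ q, b q * b' q) + e*e'*⟪x',x'⟫ + (a*e' + e*a')*⟪x',y⟫
      + e*(∑ q, b' q * v q) + e'*(∑ q, b q * v q) := by
  have hyw : ∀ q, ⟪y, w q⟫ = 0 := fun q => by rw [real_inner_comm]; exact hwy q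
  have hxw : ∀ q, ⟪w q, x'⟫ = v q := fun q => by rw [real_inner_comm]; exact hwx q
  have hyx : ⟪y, x'⟫ = ⟪x', y⟫ := real_inner_comm _ _
  simp only [inner_add_left, inner_add_right, sum_inner, inner_sum, real_inner_smul_left,
    real_inner_smul_right, hyy, hww, hwy, hyw, hwx, hxw, hyx, mul_ite, ite_mul, mul_one, mul_zero,
    zero_mul, Finset.sum_ite_eq', Finset.mem_univ, if_true, Finset.sum_add_distrib,
    Finset.sum_const_zero]
  have e1 : ∑ q : Fin k, b' q * b q = ∑ q : Fin k, b q * b' q :=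
    Finset.sum_congr rfl fun q _ => by ring
  have e2 : ∑ q : Fin k, b' q * (e * v q) = e * ∑ q : Fin k, b' q * v q := by
    rw [Finset.mul_sum]; exact Finset.sum_congr rfl fun q _ => by ring
  have e3 : ∑ q : Fin k, e' * (b q * v q) = e' * ∑ q : Fin k, b q * v q := by
    rw [Finset.mul_sum]
  rw [e1, e2, e3]
  ring

/-- The gradient of a quadratic function of the given form. -/
lemma hasGradientAt_quad {k : ℕ} (y : EuclideanSpace ℝ (Fin N))
    (w : Fin k → EuclideanSpace ℝ (Fin N)) (α γ : ℝ) (x : EuclideanSpace ℝ (Fin N)) :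
    HasGradientAt (fun x' => α * (⟪x', y⟫^2 + ∑ q, ⟪x', w q⟫^2) + γ * ‖x'‖^2)
      ((α*(2*⟪x, y⟫)) • y + (∑ q, (α*(2*⟪x, w q⟫)) • w q) + (2*γ) • x) x := by
  have key : ∀ z : EuclideanSpace ℝ (Fin N),
      HasFDerivAt (fun x' : EuclideanSpace ℝ (Fin N) => ⟪x', z⟫) (innerSL ℝ z) x := by
    intro z
    have h : (fun x' : EuclideanSpace ℝ (Fin N) => ⟪x', z⟫)
        = fun x' : EuclideanSpace ℝ (Fin N) => (innerSL ℝ z) x' := by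
      funext u; simp only [innerSL_apply_apply]; exact real_inner_comm z u
    rw [h]
    exact (innerSL ℝ z).hasFDerivAt
  have hsq : ∀ z : EuclideanSpace ℝ (Fin N),
      HasFDerivAt (fun x' : EuclideanSpace ℝ (Fin N) => ⟪x', z⟫^2)
      ((2*⟪x, z⟫) • innerSL ℝ z) x := by
    intro z
    have h := (key z).mul (key z)
    have h2 : (fun x' : EuclideanSpace ℝ (Fin N) => ⟪x', z⟫^2)
        = fun x' : EuclideanSpace ℝ (Fin N) => ⟪x', z⟫ * ⟪x', z⟫ := by
      funext u; ring
    rw [h2]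
    rw [two_mul, add_smul]
    exact h
  have hnorm : HasFDerivAt (fun x' : EuclideanSpace ℝ (Fin N) => ‖x'‖^2)
      ((2:ℝ) • innerSL ℝ x) x := by
    have h := (hasFDerivAt_id x).inner ℝ (hasFDerivAt_id x)
    have h2 : (fun x' : EuclideanSpace ℝ (Fin N) => ‖x'‖^2)
        = fun x' : EuclideanSpace ℝ (Fin N) => ⟪x', x'⟫ := by
      funext u; rw [real_inner_self_eq_norm_sq]
    rw [h2]
    refine h.congr_fderiv ?_
    ext z
    simp [fderivInnerCLM_apply, real_inner_comm, two_mul]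
  have hsum : HasFDerivAt (fun x' : EuclideanSpace ℝ (Fin N) => ∑ q, ⟪x', w q⟫^2)
      (∑ q, (2*⟪x, w q⟫) • innerSL ℝ (w q)) x :=
    HasFDerivAt.fun_sum (fun q _ => hsq (w q))
  have total := (((hsq y).add hsum).const_mul α).add (hnorm.const_mul γ)
  have hD : InnerProductSpace.toDual ℝ (EuclideanSpace ℝ (Fin N))
        ((α*(2*⟪x, y⟫)) • y + (∑ q, (α*(2*⟪x, w q⟫)) • w q) + (2*γ) • x)
      = α • ((2*⟪x, y⟫) • innerSL ℝ y + ∑ q, (2*⟪x, w q⟫) • innerSL ℝ (w q))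
        + γ • ((2:ℝ) • innerSL ℝ x) := by
    ext z
    simp only [InnerProductSpace.toDual_apply_apply, inner_add_left, sum_inner, real_inner_smul_left,
      ContinuousLinearMap.add_apply, ContinuousLinearMap.smul_apply,
      ContinuousLinearMap.coe_sum', Finset.sum_apply, innerSL_apply_apply, smul_eq_mul]
    have e1 : ∑ q, α * (2 * ⟪x, w q⟫) * ⟪w q, z⟫ = ∑ q, α * (2 * ⟪x, w q⟫ * ⟪w q, z⟫) :=
      Finset.sum_congr rfl fun q _ => by ring
    rw [e1, ← Finset.mul_sum]
    ring
  rw [hasGradientAt_iff_hasFDerivAt, hD]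
  exact total

lemma iteratedDeriv_two_quadratic (a b d : ℝ) :
    iteratedDeriv 2 (fun t : ℝ => a + b * t + d * t ^ 2) 0 = 2 * d := by
  have hd : ∀ t : ℝ, HasDerivAt (fun t : ℝ => a + b * t + d * t ^ 2) (b + d * (2 * t)) t := by
    intro t
    have h1 : HasDerivAt (fun _ : ℝ => a) 0 t := hasDerivAt_const t a
    have h2 : HasDerivAt (fun t : ℝ => b * t) b t := by
      simpa using (hasDerivAt_id t).const_mul b
    have h3 : HasDerivAt (fun t : ℝ => d * t ^ 2) (d * (2 * t)) t := by
      simpa using (hasDerivAt_pow 2 t).const_mul d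
    exact ((h1.add h2).add h3).congr_deriv (by ring)
  have hderiv : deriv (fun t : ℝ => a + b * t + d * t ^ 2) = fun t => b + d * (2 * t) :=
    funext fun t => (hd t).deriv
  have h2 : iteratedDeriv 2 (fun t : ℝ => a + b * t + d * t ^ 2) 0
      = deriv (deriv (fun t : ℝ => a + b * t + d * t ^ 2)) 0 := by
    simp [iteratedDeriv_succ, iteratedDeriv_zero]
  rw [h2, hderiv]
  have hd2 : HasDerivAt (fun t : ℝ => b + d * (2 * t)) (2 * d) 0 := by
    have := ((hasDerivAt_id (0:ℝ)).const_mul 2).const_mul d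
    exact ((hasDerivAt_const (0:ℝ) b).add this).congr_deriv (by ring)
  exact hd2.deriv

end Aux

/-- for `n > m ≥ 2`, `c = (m−1)/(n−1)` and a fixed unit vector `y`, the
polynomial `F̃(x) = ⟨x,y⟩² + Σ_q ⟨A_q x, y⟩² − c‖x‖² = F(x,y) − c‖x‖²` satisfies
Hsiang's minimality identity `⟨D(‖DF̃‖²), DF̃⟩ = 2‖DF̃‖² Δ^E F̃` at every point of its
zero locus; here `D` is the Euclidean gradient and `Δ^E` the Euclidean Laplacian
(the sum of the pure second partial derivatives). -/
theorem stmt7 (n m : ℕ) (hm : 2 ≤ m) (hmn : m < n)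
    (A : Fin (m - 1) → Matrix (Fin (n + 1)) (Fin (n + 1)) ℝ)
    (hA : IsSkewCliffordSystem A)
    (c : ℝ) (hc : c = ((m : ℝ) - 1) / ((n : ℝ) - 1))
    (y : EuclideanSpace ℝ (Fin (n + 1))) (hy : ‖y‖ = 1)
    (x : EuclideanSpace ℝ (Fin (n + 1)))
    (hx : FKM A x y - c * ‖x‖ ^ 2 = 0) :
    ⟪gradient (fun x' => ‖gradient (fun x'' => FKM A x'' y - c * ‖x''‖ ^ 2) x'‖ ^ 2) x,
        gradient (fun x'' => FKM A x'' y - c * ‖x''‖ ^ 2) x⟫ =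
      2 * ‖gradient (fun x'' => FKM A x'' y - c * ‖x''‖ ^ 2) x‖ ^ 2 *
        ∑ i, iteratedDeriv 2
          (fun t : ℝ =>
            FKM A (x + t • EuclideanSpace.single i (1 : ℝ)) y -
              c * ‖x + t • EuclideanSpace.single i (1 : ℝ)‖ ^ 2) 0 := by
  obtain ⟨hA1, hA2⟩ := hA
  have hyy : ⟪y, y⟫ = 1 := by
    rw [real_inner_self_eq_norm_sq, hy]; norm_num
  have hww : ∀ p q, ⟪act (A p)ᵀ y, act (A q)ᵀ y⟫ = if p = q then 1 else 0 :=
    inner_w_w hA1 hA2 hy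
  have hwy : ∀ q, ⟪act (A q)ᵀ y, y⟫ = 0 := inner_w_y hA2
  have hFKM : ∀ z, FKM A z y = ⟪z, y⟫ ^ 2 + ∑ q, ⟪z, act (A q)ᵀ y⟫ ^ 2 := by
    intro z
    simp only [FKM]
    congr 1
    exact Finset.sum_congr rfl fun q _ => by rw [act_inner]
  -- the gradient of F̃
  have hFfun : (fun x'' => FKM A x'' y - c * ‖x''‖ ^ 2)
      = fun x' => 1 * (⟪x', y⟫^2 + ∑ q, ⟪x', act (A q)ᵀ y⟫^2) + (-c) * ‖x'‖^2 := by
    funext z; rw [hFKM z]; ring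
  have hgradQ : gradient (fun x'' => FKM A x'' y - c * ‖x''‖ ^ 2)
      = fun x' => ((1:ℝ)*(2*⟪x', y⟫)) • y
          + (∑ q, ((1:ℝ)*(2*⟪x', act (A q)ᵀ y⟫)) • act (A q)ᵀ y) + (2*(-c)) • x' := by
    rw [hFfun]
    exact gradient_eq fun x' => hasGradientAt_quad y _ 1 (-c) x'
  -- the squared norm of the gradient of F̃
  have hGnorm : ∀ x' : EuclideanSpace ℝ (Fin (n + 1)),
      ‖((1:ℝ)*(2*⟪x', y⟫)) • y
          + (∑ q, ((1:ℝ)*(2*⟪x', act (A q)ᵀ y⟫)) • act (A q)ᵀ y) + (2*(-c)) • x'‖^2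
      = (4-8*c) * (⟪x', y⟫^2 + ∑ q, ⟪x', act (A q)ᵀ y⟫^2) + (4*c^2) * ‖x'‖^2 := by
    intro x'
    rw [← real_inner_self_eq_norm_sq,
      inner_comb y x' (fun q => act (A q)ᵀ y) hyy hww hwy
        (fun q => ⟪x', act (A q)ᵀ y⟫) (fun q => rfl) _ _ _ _ _ _]
    have c1 : ∑ q, ((1:ℝ)*(2*⟪x', act (A q)ᵀ y⟫)) * ((1:ℝ)*(2*⟪x', act (A q)ᵀ y⟫))
        = 4 * ∑ q, ⟪x', act (A q)ᵀ y⟫^2 := by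
      rw [Finset.mul_sum]; exact Finset.sum_congr rfl fun q _ => by ring
    have c2 : ∑ q, ((1:ℝ)*(2*⟪x', act (A q)ᵀ y⟫)) * ⟪x', act (A q)ᵀ y⟫
        = 2 * ∑ q, ⟪x', act (A q)ᵀ y⟫^2 := by
      rw [Finset.mul_sum]; exact Finset.sum_congr rfl fun q _ => by ring
    rw [c1, c2, real_inner_self_eq_norm_sq]
    ring
  -- the function ‖∇F̃‖² in quadratic form
  have hH : (fun x' => ‖gradient (fun x'' => FKM A x'' y - c * ‖x''‖ ^ 2) x'‖ ^ 2)
      = fun x' => (4-8*c) * (⟪x', y⟫^2 + ∑ q, ⟪x', act (A q)ᵀ y⟫^2) + (4*c^2) * ‖x'‖^2 := by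
    funext x'
    simp only [hgradQ]
    exact hGnorm x'
  -- the Laplacian computation
  have hLap : ∑ i, iteratedDeriv 2
      (fun t : ℝ => FKM A (x + t • EuclideanSpace.single i (1 : ℝ)) y -
          c * ‖x + t • EuclideanSpace.single i (1 : ℝ)‖ ^ 2) 0
      = 2*(1 + ((m:ℝ)-1)) - 2*c*((n:ℝ)+1) := by
    have hline : ∀ v : EuclideanSpace ℝ (Fin (n + 1)),
        (fun t : ℝ => FKM A (x + t • v) y - c * ‖x + t • v‖ ^ 2)
        = fun t => (FKM A x y - c*‖x‖^2)
            + (2*⟪x,y⟫*⟪v,y⟫ + (∑ q, 2*(⟪act (A q) x, y⟫*⟪act (A q) v, y⟫)) - c*(2*⟪x,v⟫)) * t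
            + (FKM A v y - c*‖v‖^2) * t^2 := by
      intro v
      funext t
      have hq : ∀ q, ⟪act (A q) (x + t • v), y⟫
          = ⟪act (A q) x, y⟫ + t * ⟪act (A q) v, y⟫ := by
        intro q; rw [act_linear, inner_add_left, real_inner_smul_left]
      have hnrm : ‖x + t • v‖^2 = ‖x‖^2 + 2*t*⟪x, v⟫ + t^2*‖v‖^2 := by
        rw [← real_inner_self_eq_norm_sq, ← real_inner_self_eq_norm_sq,
          ← real_inner_self_eq_norm_sq]
        simp only [inner_add_left, inner_add_right, real_inner_smul_left, real_inner_smul_right]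
        rw [real_inner_comm v x]; ring
      simp only [FKM, hq, inner_add_left, real_inner_smul_left, hnrm]
      rw [show (∑ q, (⟪act (A q) x, y⟫ + t * ⟪act (A q) v, y⟫)^2)
          = (∑ q, ⟪act (A q) x, y⟫^2) + (∑ q, 2*(⟪act (A q) x, y⟫*⟪act (A q) v, y⟫))*t
            + (∑ q, ⟪act (A q) v, y⟫^2)*t^2 from by
        rw [Finset.sum_mul, Finset.sum_mul, ← Finset.sum_add_distrib, ← Finset.sum_add_distrib]
        exact Finset.sum_congr rfl fun q _ => by ring]
      ring
    have hper : ∀ i : Fin (n + 1), iteratedDeriv 2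
        (fun t : ℝ => FKM A (x + t • EuclideanSpace.single i (1 : ℝ)) y -
            c * ‖x + t • EuclideanSpace.single i (1 : ℝ)‖ ^ 2) 0
        = 2 * (FKM A (EuclideanSpace.single i (1:ℝ)) y - c * ‖EuclideanSpace.single i (1:ℝ)‖^2) := by
      intro i
      rw [hline (EuclideanSpace.single i (1:ℝ)), iteratedDeriv_two_quadratic]
    rw [Finset.sum_congr rfl fun i _ => hper i]
    have hsingle : ∀ (i : Fin (n+1)) (z : EuclideanSpace ℝ (Fin (n+1))),
        ⟪EuclideanSpace.single i (1:ℝ), z⟫ = z i := by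
      intro i z; simp [EuclideanSpace.inner_single_left]
    have hinner_sum : ∀ z1 z2 : EuclideanSpace ℝ (Fin (n+1)), ⟪z1, z2⟫ = ∑ i, z1 i * z2 i := by
      intro z1 z2; simp [PiLp.inner_apply, RCLike.inner_apply, conj_trivial]
      exact Finset.sum_congr rfl fun i _ => mul_comm _ _
    have hper2 : ∀ i : Fin (n+1),
        2 * (FKM A (EuclideanSpace.single i (1:ℝ)) y - c * ‖EuclideanSpace.single i (1:ℝ)‖^2)
        = 2 * (y i)^2 + 2 * (∑ q, (act (A q)ᵀ y) i ^ 2) - 2*c := by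
      intro i
      rw [hFKM, hsingle, EuclideanSpace.norm_single]
      rw [show ∑ q, ⟪EuclideanSpace.single i (1:ℝ), act (A q)ᵀ y⟫ ^ 2
          = ∑ q, (act (A q)ᵀ y) i ^ 2 from
        Finset.sum_congr rfl fun q _ => by rw [hsingle]]
      norm_num
      ring
    rw [Finset.sum_congr rfl fun i _ => hper2 i]
    rw [Finset.sum_sub_distrib, Finset.sum_add_distrib, ← Finset.mul_sum, ← Finset.mul_sum,
      Finset.sum_const, Finset.card_univ, Fintype.card_fin]
    have s1 : ∑ i, (y i)^2 = 1 := by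
      rw [show ∑ i, (y i)^2 = ∑ i, y i * y i from Finset.sum_congr rfl fun i _ => sq (y i) ▸ by ring,
        ← hinner_sum, hyy]
    have s2 : ∑ i, ∑ q, (act (A q)ᵀ y) i ^ 2 = (m:ℝ) - 1 := by
      rw [Finset.sum_comm]
      have : ∀ q, ∑ i, (act (A q)ᵀ y) i ^ 2 = 1 := by
        intro q
        rw [show ∑ i, (act (A q)ᵀ y) i ^ 2 = ∑ i, (act (A q)ᵀ y) i * (act (A q)ᵀ y) i from
          Finset.sum_congr rfl fun i _ => by ring, ← hinner_sum]
        rw [hww q q, if_pos rfl]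
      rw [Finset.sum_congr rfl fun q _ => this q, Finset.sum_const, Finset.card_univ,
        Fintype.card_fin, nsmul_eq_mul, mul_one, Nat.cast_sub (by omega : 1 ≤ m), Nat.cast_one]
    rw [s1, s2, nsmul_eq_mul]
    push_cast
    ring
  -- put it all together
  have hx' : ⟪x, y⟫^2 + (∑ q, ⟪x, act (A q)ᵀ y⟫^2) - c * ‖x‖^2 = 0 := by
    rw [hFKM] at hx; linarith [hx]
  have hn1 : ((n:ℝ) - 1) ≠ 0 := by
    have h3 : (3:ℝ) ≤ (n:ℝ) := by exact_mod_cast (by omega : 3 ≤ n)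
    intro h; linarith
  have hcn : c * ((n:ℝ) - 1) = (m:ℝ) - 1 := by
    rw [hc]; field_simp
  rw [hH, (hasGradientAt_quad y (fun q => act (A q)ᵀ y) (4-8*c) (4*c^2) x).gradient]
  simp only [hgradQ]
  rw [hGnorm x, hLap,
    inner_comb y x (fun q => act (A q)ᵀ y) hyy hww hwy
      (fun q => ⟪x, act (A q)ᵀ y⟫) (fun q => rfl) _ _ _ _ _ _]
  have c1 : ∑ q, ((4-8*c)*(2*⟪x, act (A q)ᵀ y⟫)) * ((1:ℝ)*(2*⟪x, act (A q)ᵀ y⟫))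
      = (4*(4-8*c)) * ∑ q, ⟪x, act (A q)ᵀ y⟫^2 := by
    rw [Finset.mul_sum]; exact Finset.sum_congr rfl fun q _ => by ring
  have c2 : ∑ q, ((1:ℝ)*(2*⟪x, act (A q)ᵀ y⟫)) * ⟪x, act (A q)ᵀ y⟫
      = 2 * ∑ q, ⟪x, act (A q)ᵀ y⟫^2 := by
    rw [Finset.mul_sum]; exact Finset.sum_congr rfl fun q _ => by ring
  have c3 : ∑ q, ((4-8*c)*(2*⟪x, act (A q)ᵀ y⟫)) * ⟪x, act (A q)ᵀ y⟫
      = (2*(4-8*c)) * ∑ q, ⟪x, act (A q)ᵀ y⟫^2 := by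
    rw [Finset.mul_sum]; exact Finset.sum_congr rfl fun q _ => by ring
  rw [c1, c2, c3, real_inner_self_eq_norm_sq]
  linear_combination (16*c - 16*c^2) * hx'
    + (4*((4-8*c)*(⟪x, y⟫^2 + ∑ q, ⟪x, act (A q)ᵀ y⟫^2) + 4*c^2*‖x‖^2)) * hcn
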